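/- Consider the ODE system ż₁ = -k₁ z₁ + z₂, ż₂ = -k₂ z₂ + θ̃ + ν, θ̃' = -z₂, η̇ = S(p_u - p_CoM)(u_n + ν) + S(p_θ - p_CoM)θ, with k₁, k₂ positive definite. If at every time t the input ν(t) satisfies (z₂ᵀ + ηᵀ S(p_u - p_CoM)) ν ≤ -ηᵀ(S(p_u - p_CoM) u_n + S(p_θ - p_CoM)θ), then V = z₁ᵀz₁ + z₂ᵀz₂ + θ̃ᵀθ̃ + ηᵀη is non-increasing along trajectories provided z₁ᵀz₂ ≤ z₁ᵀk₁z₁ + z₂ᵀk₂z₂. -/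

import Mathlib

open Matrix

/-- The cross-product (hat) matrix `S x`. -/
def skewMat (x : Fin 3 → ℝ) : Matrix (Fin 3) (Fin 3) ℝ :=
  !![0, -x 2, x 1; x 2, 0, -x 0; -x 1, x 0, 0]

lemma dotDeriv {f g : ℝ → Fin 3 → ℝ} {f' g' : Fin 3 → ℝ} {t : ℝ}
    (hf : HasDerivAt f f' t) (hg : HasDerivAt g g' t) :
    HasDerivAt (fun t => f t ⬝ᵥ g t) (f' ⬝ᵥ g t + f t ⬝ᵥ g') t := by
  simp only [dotProduct, ← Finset.sum_add_distrib]
  exact HasDerivAt.fun_sum fun i _ =>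
    ((hasDerivAt_pi.mp hf i).mul (hasDerivAt_pi.mp hg i))

/-- Lemma 1: along the closed-loop dynamics
`ż₁ = -k₁z₁ + z₂`, `ż₂ = -k₂z₂ + θ̃ + ν`, `θ̃' = -z₂`,
`η̇ = S(p_u - p_CoM)(u_n + ν) + S(p_θ - p_CoM)θ`,
if `ν` satisfies the stabilizing inequality
`(z₂ᵀ + ηᵀ S(p_u - p_CoM)) ν ≤ -ηᵀ(S(p_u - p_CoM) u_n + S(p_θ - p_CoM)θ)`
at every time, and `z₁ᵀz₂ ≤ z₁ᵀk₁z₁ + z₂ᵀk₂z₂`, then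
`V = z₁ᵀz₁ + z₂ᵀz₂ + θ̃ᵀθ̃ + ηᵀη` is non-increasing. -/
theorem lyapunov_nonincreasing_stabilizing_inequality
    (k₁ k₂ : Matrix (Fin 3) (Fin 3) ℝ)
    (hk₁ : k₁.PosDef) (hk₂ : k₂.PosDef)
    (z₁ z₂ θt η ν un pu pc pth : ℝ → Fin 3 → ℝ) (θ : Fin 3 → ℝ)
    (hz₁ : ∀ t, HasDerivAt z₁ (-(k₁ *ᵥ z₁ t) + z₂ t) t)
    (hz₂ : ∀ t, HasDerivAt z₂ (-(k₂ *ᵥ z₂ t) + θt t + ν t) t)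
    (hθ : ∀ t, HasDerivAt θt (-(z₂ t)) t)
    (hη : ∀ t, HasDerivAt η
      ((skewMat (pu t - pc t)) *ᵥ (un t + ν t)
        + (skewMat (pth t - pc t)) *ᵥ θ) t)
    (hν : ∀ t, z₂ t ⬝ᵥ ν t + η t ⬝ᵥ ((skewMat (pu t - pc t)) *ᵥ ν t) ≤
      -(η t ⬝ᵥ ((skewMat (pu t - pc t)) *ᵥ un t
        + (skewMat (pth t - pc t)) *ᵥ θ)))
    (hquad : ∀ t, z₁ t ⬝ᵥ z₂ t ≤
      z₁ t ⬝ᵥ (k₁ *ᵥ z₁ t) + z₂ t ⬝ᵥ (k₂ *ᵥ z₂ t)) :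
    Antitone (fun t => z₁ t ⬝ᵥ z₁ t + z₂ t ⬝ᵥ z₂ t + θt t ⬝ᵥ θt t
      + η t ⬝ᵥ η t) := by
  have hV : ∀ t, HasDerivAt
      (fun t => z₁ t ⬝ᵥ z₁ t + z₂ t ⬝ᵥ z₂ t + θt t ⬝ᵥ θt t + η t ⬝ᵥ η t)
      (((-(k₁ *ᵥ z₁ t) + z₂ t) ⬝ᵥ z₁ t + z₁ t ⬝ᵥ (-(k₁ *ᵥ z₁ t) + z₂ t))
        + ((-(k₂ *ᵥ z₂ t) + θt t + ν t) ⬝ᵥ z₂ t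
            + z₂ t ⬝ᵥ (-(k₂ *ᵥ z₂ t) + θt t + ν t))
        + ((-(z₂ t)) ⬝ᵥ θt t + θt t ⬝ᵥ (-(z₂ t)))
        + (((skewMat (pu t - pc t)) *ᵥ (un t + ν t)
              + (skewMat (pth t - pc t)) *ᵥ θ) ⬝ᵥ η t
            + η t ⬝ᵥ ((skewMat (pu t - pc t)) *ᵥ (un t + ν t)
              + (skewMat (pth t - pc t)) *ᵥ θ))) t := fun t =>
    (((dotDeriv (hz₁ t) (hz₁ t)).add (dotDeriv (hz₂ t) (hz₂ t))).add
      (dotDeriv (hθ t) (hθ t))).add (dotDeriv (hη t) (hη t))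
  apply antitone_of_deriv_nonpos
  · exact fun t => ((hV t).differentiableAt)
  · intro t
    rw [(hV t).deriv]
    have h1 := hν t
    have h2 := hquad t
    simp only [add_dotProduct, dotProduct_add, neg_dotProduct, dotProduct_neg,
      mulVec_add] at *
    have c1 : z₁ t ⬝ᵥ z₂ t = z₂ t ⬝ᵥ z₁ t := dotProduct_comm _ _
    have c2 : z₁ t ⬝ᵥ (k₁ *ᵥ z₁ t) = (k₁ *ᵥ z₁ t) ⬝ᵥ z₁ t := dotProduct_comm _ _
    have c3 : z₂ t ⬝ᵥ (k₂ *ᵥ z₂ t) = (k₂ *ᵥ z₂ t) ⬝ᵥ z₂ t := dotProduct_comm _ _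
    have c4 : θt t ⬝ᵥ z₂ t = z₂ t ⬝ᵥ θt t := dotProduct_comm _ _
    have c5 : ν t ⬝ᵥ z₂ t = z₂ t ⬝ᵥ ν t := dotProduct_comm _ _
    have c6 : ((skewMat (pu t - pc t)) *ᵥ un t) ⬝ᵥ η t
        = η t ⬝ᵥ ((skewMat (pu t - pc t)) *ᵥ un t) := dotProduct_comm _ _
    have c7 : ((skewMat (pu t - pc t)) *ᵥ ν t) ⬝ᵥ η t
        = η t ⬝ᵥ ((skewMat (pu t - pc t)) *ᵥ ν t) := dotProduct_comm _ _
    have c8 : ((skewMat (pth t - pc t)) *ᵥ θ) ⬝ᵥ η t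
        = η t ⬝ᵥ ((skewMat (pth t - pc t)) *ᵥ θ) := dotProduct_comm _ _
    linarith
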